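/- With W_n and M as above, M(reverse(W_n)) = [[X_n - X_{n-1}^2, 1 - X̃_n],[X_{n-1}^2, X̃_n]] for all n ≥ 1. -/
import Mathlib

variable {R : Type*} [CommRing R]

/-- `X k = 1 + ∑_{j=1}^k ∏_{i=1}^j x_i^{2^(j-i)}`. -/
def Xpoly (x : ℕ → R) (k : ℕ) : R :=
  1 + ∑ j ∈ Finset.Icc 1 k, ∏ i ∈ Finset.Icc 1 j, x i ^ 2 ^ (j - i)

/-- `X̃ k = 1 + ∑_{j=1}^{k-1} ∏_{i=1}^j x_i^{2^(j-i)} - ∏_{i=1}^k x_i^{2^(k-i)}`. -/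
def Xtilde (x : ℕ → R) (k : ℕ) : R :=
  1 + ∑ j ∈ Finset.Icc 1 (k - 1), ∏ i ∈ Finset.Icc 1 j, x i ^ 2 ^ (j - i)
    - ∏ i ∈ Finset.Icc 1 k, x i ^ 2 ^ (k - i)

/-- The paperfolding words: `W 1 = (-x₁, x₁)`, `W (k+1) = W k ⬝ (x_{k+1}, -x_{k+1}) ⬝ reverse (W k)`. -/
def Wword (x : ℕ → R) : ℕ → List R
  | 0 => []
  | 1 => [-x 1, x 1]
  | (k + 2) => Wword x (k + 1) ++ [x (k + 2), -x (k + 2)] ++ (Wword x (k + 1)).reverse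

/-- `M(U)`: the ordered product of the matrices `[[0,u],[1,1]]` over the letters `u` of `U`. -/
def Mword (U : List R) : Matrix (Fin 2) (Fin 2) R :=
  (U.map fun u => !![0, u; 1, 1]).prod

/-- the product `∏_{i=1}^k x_i^{2^{k-i}}`. -/
def Pprod (x : ℕ → R) (k : ℕ) : R := ∏ i ∈ Finset.Icc 1 k, x i ^ 2 ^ (k - i)

lemma Mword_append (a b : List R) : Mword (a ++ b) = Mword a * Mword b := by
  simp [Mword]

lemma Pprod_succ (x : ℕ → R) (k : ℕ) :
    Pprod x (k + 1) = x (k + 1) * Pprod x k ^ 2 := by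
  unfold Pprod
  rw [Finset.prod_Icc_succ_top (by omega), ← Finset.prod_pow]
  have h : ∀ i ∈ Finset.Icc 1 k, x i ^ 2 ^ (k + 1 - i) = (x i ^ 2 ^ (k - i)) ^ 2 := by
    intro i hi
    rw [← pow_mul]
    congr 1
    rw [Finset.mem_Icc] at hi
    have : k + 1 - i = (k - i) + 1 := by omega
    rw [this, pow_succ]
  rw [Finset.prod_congr rfl h]
  simp [mul_comm]

lemma Xpoly_succ (x : ℕ → R) (k : ℕ) :
    Xpoly x (k + 1) = Xpoly x k + Pprod x (k + 1) := by
  unfold Xpoly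
  rw [Finset.sum_Icc_succ_top (by omega)]
  simp [Pprod, add_assoc]

lemma Xtilde_eq (x : ℕ → R) (k : ℕ) :
    Xtilde x k = Xpoly x (k - 1) - Pprod x k := rfl

theorem Mword_Wword_key (x : ℕ → R) (n : ℕ) (hn : 1 ≤ n) :
    Mword (Wword x n) =
      !![Xtilde x n - Xpoly x (n - 1) ^ 2, 1 - Xpoly x n;
         Xpoly x (n - 1) ^ 2, Xpoly x n] ∧
    Mword (Wword x n).reverse =
      !![Xpoly x n - Xpoly x (n - 1) ^ 2, 1 - Xtilde x n;
         Xpoly x (n - 1) ^ 2, Xtilde x n] := by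
  induction n with
  | zero => omega
  | succ m ih =>
    rcases Nat.eq_zero_or_pos m with hm | hm
    · subst hm
      have hX0 : Xpoly x 0 = 1 := by simp [Xpoly]
      have hX1 : Xpoly x 1 = 1 + x 1 := by simp [Xpoly]
      have hT1 : Xtilde x 1 = 1 - x 1 := by simp [Xtilde]
      constructor <;>
      · show Mword _ = _
        simp only [Wword, List.reverse_cons, List.reverse_nil, List.nil_append,
          List.cons_append, Mword, List.map_cons, List.map_nil, List.prod_cons,
          List.prod_nil, hX0, hX1, hT1]
        ext i j
        fin_cases i <;> fin_cases j <;>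
          simp [Matrix.mul_apply, Fin.sum_univ_two] <;> ring
    · obtain ⟨k, rfl⟩ : ∃ k, m = k + 1 := ⟨m - 1, by omega⟩
      obtain ⟨h1, h2⟩ := ih (by omega)
      have hW : Wword x (k + 2) =
          Wword x (k + 1) ++ [x (k + 2), -x (k + 2)] ++ (Wword x (k + 1)).reverse := rfl
      have hrec1 : Xpoly x (k + 1) = Xpoly x k + Pprod x (k + 1) := Xpoly_succ x k
      have hrec2 : Xtilde x (k + 1) = Xpoly x k - Pprod x (k + 1) := Xtilde_eq x (k + 1)
      have hrec3 : Xpoly x (k + 2) =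
          Xpoly x (k + 1) + x (k + 2) * Pprod x (k + 1) ^ 2 := by
        rw [Xpoly_succ, Pprod_succ]
      have hrec4 : Xtilde x (k + 2) =
          Xpoly x (k + 1) - x (k + 2) * Pprod x (k + 1) ^ 2 := by
        rw [Xtilde_eq, Pprod_succ]; rfl
      have hmid : Mword ([x (k + 2), -x (k + 2)] : List R) =
          !![0, x (k + 2); 1, 1] * !![0, -x (k + 2); 1, 1] := by
        simp [Mword]
      have hmid' : Mword ([-x (k + 2), x (k + 2)] : List R) =
          !![0, -x (k + 2); 1, 1] * !![0, x (k + 2); 1, 1] := by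
        simp [Mword]
      constructor
      · rw [hW, Mword_append, Mword_append, h1, h2, hmid]
        simp only [Nat.add_sub_cancel, hrec3, hrec4] at *
        rw [hrec1, hrec2]
        ext i j
        fin_cases i <;> fin_cases j <;>
          simp [Matrix.mul_apply, Fin.sum_univ_two, hrec1, hrec2] <;> ring
      · have hWr : (Wword x (k + 2)).reverse =
            Wword x (k + 1) ++ [-x (k + 2), x (k + 2)] ++ (Wword x (k + 1)).reverse := by
          rw [hW]; simp
        rw [hWr, Mword_append, Mword_append, h1, h2, hmid']
        simp only [Nat.add_sub_cancel, hrec3, hrec4] at *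
        rw [hrec1, hrec2]
        ext i j
        fin_cases i <;> fin_cases j <;>
          simp [Matrix.mul_apply, Fin.sum_univ_two, hrec1, hrec2] <;> ring

/-- `M(reverse W_n) = [[X_n - X_{n-1}², 1 - X̃_n],[X_{n-1}², X̃_n]]`. -/
theorem Mword_Wword_reverse (x : ℕ → R) (n : ℕ) (hn : 1 ≤ n) :
    Mword (Wword x n).reverse =
      !![Xpoly x n - Xpoly x (n - 1) ^ 2, 1 - Xtilde x n;
         Xpoly x (n - 1) ^ 2, Xtilde x n] :=
  (Mword_Wword_key x n hn).2
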